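/- Let L be the combinatorial graph Laplacian of a connected weighted graph G on vertex set V, let V_1 ⊊ V with V_1 and V_1^c nonempty, and let W^red be the reduced weights of the Kron reduction K(L,V_1). Then for distinct vertices i, j ∈ V_1, the reduced weight satisfies W^red_{ij} > 0 if and only if there is a path i = v_0, v_1, …, v_m = j in G (each consecutive pair joined by an edge of positive weight) all of whose vertices belong to {i, j} ∪ V_1^c. -/

import Mathlib

open Matrix

noncomputable def deg {n : Type*} [Fintype n] (W : Matrix n n ℝ) (i : n) : ℝ := ∑ j, W i j

noncomputable def lap {n : Type*} [Fintype n] [DecidableEq n] (W : Matrix n n ℝ) :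
    Matrix n n ℝ :=
  Matrix.diagonal (deg W) - W

def IsConn {n : Type*} (W : Matrix n n ℝ) : Prop :=
  ∀ i j : n, Relation.ReflTransGen (fun a b => 0 < W a b) i j

def IsBipartiteWith {n : Type*} (W : Matrix n n ℝ) (V1 : Set n) : Prop :=
  ∀ i j, 0 < W i j → (i ∈ V1 ↔ j ∉ V1)

open Classical in
noncomputable def sortedEigs {n : Type*} [Fintype n] [DecidableEq n] (A : Matrix n n ℝ) :
    Fin (Fintype.card n) → ℝ :=
  if h : A.IsHermitian then
    (fun i => h.eigenvalues ((Fintype.equivFin n).symm i)) ∘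
      ⇑(Tuple.sort fun i => h.eigenvalues ((Fintype.equivFin n).symm i))
  else 0

noncomputable def kron {n : Type*} [Fintype n] [DecidableEq n] (L : Matrix n n ℝ)
    (V1 : Finset n) : Matrix ↥V1 ↥V1 ℝ :=
  L.submatrix (Subtype.val : ↥V1 → n) (Subtype.val : ↥V1 → n) -
    L.submatrix (Subtype.val : ↥V1 → n) (Subtype.val : ↥(V1ᶜ) → n) *
      (L.submatrix (Subtype.val : ↥(V1ᶜ) → n) (Subtype.val : ↥(V1ᶜ) → n))⁻¹ *
      L.submatrix (Subtype.val : ↥(V1ᶜ) → n) (Subtype.val : ↥V1 → n)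

noncomputable def wred {m : Type*} [DecidableEq m] (K : Matrix m m ℝ) : Matrix m m ℝ :=
  Matrix.of fun i j => if i = j then 0 else -K i j

namespace KronAux

variable {N : ℕ}

lemma lap_apply_ne (W : Matrix (Fin N) (Fin N) ℝ) {i j : Fin N} (h : i ≠ j) :
    lap W i j = -W i j := by
  simp [lap, Matrix.sub_apply, diagonal_apply_ne _ h]

lemma lap_symm (W : Matrix (Fin N) (Fin N) ℝ) (hsymm : W.IsSymm) (i j : Fin N) :
    lap W j i = lap W i j := by
  rcases eq_or_ne i j with rfl | h
  · rfl
  · rw [lap_apply_ne W h.symm, lap_apply_ne W h, hsymm.apply]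

lemma quad_eq (W : Matrix (Fin N) (Fin N) ℝ) (hsymm : W.IsSymm) (x : Fin N → ℝ) :
    2 * (x ⬝ᵥ (lap W *ᵥ x)) = ∑ i, ∑ j, W i j * (x i - x j) ^ 2 := by
  have hL : x ⬝ᵥ (lap W *ᵥ x)
      = (∑ i, ∑ j, W i j * (x i * x i)) - ∑ i, ∑ j, W i j * (x i * x j) := by
    simp only [dotProduct, mulVec, lap, Matrix.sub_apply, deg]
    rw [← Finset.sum_sub_distrib]
    refine Finset.sum_congr rfl fun i _ => ?_
    have hdiagsum : (∑ j, (diagonal (deg W) i j) * x j) = (∑ j, W i j) * x i := by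
      simp [diagonal_apply, deg, Finset.sum_ite_eq, Finset.mem_univ]
    rw [show (∑ j, (diagonal (deg W) i j - W i j) * x j)
        = (∑ j, diagonal (deg W) i j * x j) - ∑ j, W i j * x j by
      rw [← Finset.sum_sub_distrib]; exact Finset.sum_congr rfl fun j _ => by ring]
    rw [hdiagsum, Finset.sum_mul, mul_sub, Finset.mul_sum, Finset.mul_sum]
    refine congrArg₂ (· - ·) ?_ ?_ <;> exact Finset.sum_congr rfl fun j _ => by ring
  have hswap : ∑ i, ∑ j, W i j * (x j * x j) = ∑ i, ∑ j, W i j * (x i * x i) := by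
    rw [Finset.sum_comm]
    exact Finset.sum_congr rfl fun i _ => Finset.sum_congr rfl fun j _ => by
      rw [hsymm.apply]
  have hexp : ∑ i, ∑ j, W i j * (x i - x j) ^ 2
      = (∑ i, ∑ j, W i j * (x i * x i)) - 2 * (∑ i, ∑ j, W i j * (x i * x j))
        + ∑ i, ∑ j, W i j * (x j * x j) := by
    simp only [Finset.mul_sum, ← Finset.sum_sub_distrib, ← Finset.sum_add_distrib]
    exact Finset.sum_congr rfl fun i _ => Finset.sum_congr rfl fun j _ => by ring
  rw [hL, hexp, hswap]; ring


noncomputable def Asub (W : Matrix (Fin N) (Fin N) ℝ) (V1 : Finset (Fin N)) :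
    Matrix ↥(V1ᶜ) ↥(V1ᶜ) ℝ :=
  (lap W).submatrix Subtype.val Subtype.val

noncomputable def ext (V1 : Finset (Fin N)) (x : ↥(V1ᶜ) → ℝ) : Fin N → ℝ :=
  fun i => if h : i ∈ V1ᶜ then x ⟨i, h⟩ else 0

lemma ext_mem (V1 : Finset (Fin N)) (x : ↥(V1ᶜ) → ℝ) {i : Fin N} (h : i ∈ V1ᶜ) :
    ext V1 x i = x ⟨i, h⟩ := dif_pos h

lemma ext_not (V1 : Finset (Fin N)) (x : ↥(V1ᶜ) → ℝ) {i : Fin N} (h : i ∉ V1ᶜ) :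
    ext V1 x i = 0 := dif_neg h

lemma quad_restrict (W : Matrix (Fin N) (Fin N) ℝ) (V1 : Finset (Fin N)) (x : ↥(V1ᶜ) → ℝ) :
    x ⬝ᵥ (Asub W V1 *ᵥ x) = ext V1 x ⬝ᵥ (lap W *ᵥ ext V1 x) := by
  have hinner : ∀ i : Fin N, (∑ j, lap W i j * ext V1 x j)
      = ∑ b : ↥(V1ᶜ), lap W i b.1 * x b := by
    intro i
    rw [show (∑ j, lap W i j * ext V1 x j) = ∑ j ∈ V1ᶜ, lap W i j * ext V1 x j from
      (Finset.sum_subset (Finset.subset_univ _) fun j _ hj => by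
        rw [ext_not V1 x hj, mul_zero]).symm]
    rw [← Finset.sum_coe_sort]
    exact Finset.sum_congr rfl fun b _ => by rw [ext_mem V1 x b.2]
  refine Eq.symm ?_
  calc ext V1 x ⬝ᵥ (lap W *ᵥ ext V1 x)
      = ∑ i, ext V1 x i * ∑ j, lap W i j * ext V1 x j := rfl
    _ = ∑ i ∈ V1ᶜ, ext V1 x i * ∑ j, lap W i j * ext V1 x j :=
        (Finset.sum_subset (Finset.subset_univ _) fun i _ hi => by
          rw [ext_not V1 x hi, zero_mul]).symm
    _ = ∑ a : ↥(V1ᶜ), ext V1 x a.1 * ∑ j, lap W a.1 j * ext V1 x j :=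
        (Finset.sum_coe_sort _ _).symm
    _ = ∑ a : ↥(V1ᶜ), x a * ∑ b : ↥(V1ᶜ), lap W a.1 b.1 * x b := by
        refine Finset.sum_congr rfl fun a _ => ?_
        rw [ext_mem V1 x a.2, hinner]
    _ = x ⬝ᵥ (Asub W V1 *ᵥ x) := rfl

lemma Asub_posdef (W : Matrix (Fin N) (Fin N) ℝ) (V1 : Finset (Fin N))
    (hsymm : W.IsSymm) (hnonneg : ∀ i j, 0 ≤ W i j) (hconn : IsConn W)
    (h1 : V1.Nonempty) : (Asub W V1).PosDef := by
  refine Matrix.PosDef.of_dotProduct_mulVec_pos ?_ ?_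
  · ext a b
    simp only [conjTranspose_apply, Asub, submatrix_apply, star_trivial]
    exact lap_symm W hsymm a.1 b.1
  · intro x hx
    have hstar : star x = x := by ext a; simp
    rw [hstar]
    have hq := quad_restrict W V1 x
    have h2 := quad_eq W hsymm (ext V1 x)
    have hterm : ∀ i ∈ (Finset.univ : Finset (Fin N)), ∀ j ∈ (Finset.univ : Finset (Fin N)),
        0 ≤ W i j * (ext V1 x i - ext V1 x j) ^ 2 :=
      fun i _ j _ => mul_nonneg (hnonneg i j) (sq_nonneg _)
    have hnn : 0 ≤ x ⬝ᵥ (Asub W V1 *ᵥ x) := by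
      rw [hq]
      nlinarith [Finset.sum_nonneg fun i (_ : i ∈ Finset.univ) =>
        Finset.sum_nonneg fun j (_ : j ∈ Finset.univ) => hterm i (Finset.mem_univ i) j (Finset.mem_univ j)]
    rcases hnn.lt_or_eq with h | h
    · exact h
    · exfalso
      -- quad form zero: show x = 0
      have hzero : ∑ i, ∑ j, W i j * (ext V1 x i - ext V1 x j) ^ 2 = 0 := by
        rw [← h2, ← hq, ← h]; ring
      have hloc : ∀ i j, 0 < W i j → ext V1 x i = ext V1 x j := by
        intro i j hw
        have h3 := (Finset.sum_eq_zero_iff_of_nonneg fun i _ =>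
          Finset.sum_nonneg fun j _ => hterm i (Finset.mem_univ i) j (Finset.mem_univ j)).mp
          hzero i (Finset.mem_univ i)
        have h4 := (Finset.sum_eq_zero_iff_of_nonneg fun j _ =>
          hterm i (Finset.mem_univ i) j (Finset.mem_univ j)).mp h3 j (Finset.mem_univ j)
        have h5 : (ext V1 x i - ext V1 x j) ^ 2 = 0 := by
          rcases mul_eq_zero.mp h4 with h | h
          · exact absurd h hw.ne'
          · exact h
        have := pow_eq_zero_iff (n := 2) (by norm_num) |>.mp h5
        linarith [this]
      have hconst : ∀ i j : Fin N, ext V1 x i = ext V1 x j := by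
        intro i j
        induction hconn i j with
        | refl => rfl
        | tail _ hstep ih => exact ih.trans (hloc _ _ hstep)
      obtain ⟨i0, hi0⟩ := h1
      have hi0' : ext V1 x i0 = 0 := ext_not V1 x (by simp [Finset.mem_compl, hi0])
      apply hx
      funext a
      have := hconst i0 a.1
      rw [hi0', ext_mem V1 x a.2] at this
      simp [← this]


variable (W : Matrix (Fin N) (Fin N) ℝ) (V1 : Finset (Fin N))

def Reach : ↥(V1ᶜ) → ↥(V1ᶜ) → Prop :=
  Relation.ReflTransGen (fun a b => 0 < W a.1 b.1)

lemma Asub_off {a b : ↥(V1ᶜ)} (h : a ≠ b) : Asub W V1 a b = -W a.1 b.1 := by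
  have : a.1 ≠ b.1 := fun e => h (Subtype.ext e)
  simp [Asub, submatrix_apply, lap_apply_ne W this]

lemma mulVec_invCol (hpd : (Asub W V1).PosDef) (b : ↥(V1ᶜ)) :
    Asub W V1 *ᵥ (fun a => (Asub W V1)⁻¹ a b) = fun a => if a = b then (1 : ℝ) else 0 := by
  have h := Matrix.mul_nonsing_inv (Asub W V1) hpd.det_pos.ne'.isUnit
  funext a
  have h2 := congrFun (congrFun h a) b
  simpa [mul_apply, mulVec, dotProduct, one_apply] using h2

lemma quad_pos (hpd : (Asub W V1).PosDef) {x : ↥(V1ᶜ) → ℝ} (hx : x ≠ 0) :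
    0 < x ⬝ᵥ (Asub W V1 *ᵥ x) := by
  have := hpd.dotProduct_mulVec_pos hx
  rwa [show star x = x from funext fun a => by simp] at this

lemma inv_nonneg (hpd : (Asub W V1).PosDef) (hnonneg : ∀ i j, 0 ≤ W i j)
    (a b : ↥(V1ᶜ)) : 0 ≤ (Asub W V1)⁻¹ a b := by
  set x : ↥(V1ᶜ) → ℝ := fun a => (Asub W V1)⁻¹ a b with hxdef
  set p : ↥(V1ᶜ) → ℝ := fun a => max (x a) 0 with hpdef
  set q : ↥(V1ᶜ) → ℝ := fun a => max (-x a) 0 with hqdef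
  have hp0 : ∀ c, 0 ≤ p c := fun c => le_max_right _ _
  have hq0 : ∀ c, 0 ≤ q c := fun c => le_max_right _ _
  have hpq : x = p - q := by
    funext c
    simp only [hpdef, hqdef, Pi.sub_apply]
    rcases le_total 0 (x c) with h | h
    · rw [max_eq_left h, max_eq_right (by linarith)]; ring
    · rw [max_eq_right h, max_eq_left (by linarith)]; ring
  have hqp : ∀ c, q c * p c = 0 := by
    intro c
    rcases le_total 0 (x c) with h | h
    · rw [show q c = 0 from max_eq_right (by simpa using h), zero_mul]
    · rw [show p c = 0 from max_eq_right h, mul_zero]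
  have hqzero : q = 0 := by
    by_contra hq
    have hpos := quad_pos W V1 hpd hq
    have hqAp : q ⬝ᵥ (Asub W V1 *ᵥ p) ≤ 0 := by
      rw [show q ⬝ᵥ (Asub W V1 *ᵥ p) = ∑ c, ∑ d, q c * (Asub W V1 c d * p d) by
        simp [dotProduct, mulVec, Finset.mul_sum]]
      apply Finset.sum_nonpos
      intro c _
      apply Finset.sum_nonpos
      intro d _
      rcases eq_or_ne c d with rfl | hcd
      · calc q c * (Asub W V1 c c * p c) = Asub W V1 c c * (q c * p c) := by ring
          _ = 0 := by rw [hqp c, mul_zero]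
          _ ≤ 0 := le_rfl
      · have : Asub W V1 c d ≤ 0 := by
          rw [Asub_off W V1 hcd]
          simp [hnonneg c.1 d.1]
        exact mul_nonpos_of_nonneg_of_nonpos (hq0 c)
          (mul_nonpos_of_nonpos_of_nonneg this (hp0 d))
    have hqAx : q ⬝ᵥ (Asub W V1 *ᵥ x) = q b := by
      rw [mulVec_invCol W V1 hpd b]
      simp [dotProduct]
    have hsplit : q ⬝ᵥ (Asub W V1 *ᵥ q) = q ⬝ᵥ (Asub W V1 *ᵥ p) - q b := by
      rw [← hqAx, hpq, Matrix.mulVec_sub, dotProduct_sub]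
      ring
    rw [hsplit] at hpos
    have := hq0 b
    linarith
  have : x a = p a := by rw [hpq]; simp [hqzero]
  rw [hxdef] at this
  rw [show (Asub W V1)⁻¹ a b = p a from this]
  exact hp0 a

lemma inv_diag_pos (hpd : (Asub W V1).PosDef) (b : ↥(V1ᶜ)) :
    0 < (Asub W V1)⁻¹ b b := by
  have hinv := hpd.inv
  have hne : (Pi.single b 1 : ↥(V1ᶜ) → ℝ) ≠ 0 := by
    intro h
    have := congrFun h b
    simp at this
  have := hinv.dotProduct_mulVec_pos hne
  rwa [show star (Pi.single b 1 : ↥(V1ᶜ) → ℝ) = Pi.single b 1 from funext fun a => by simp,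
    show (Pi.single b 1 : ↥(V1ᶜ) → ℝ) ⬝ᵥ ((Asub W V1)⁻¹ *ᵥ Pi.single b 1)
      = (Asub W V1)⁻¹ b b by
        simp [dotProduct, mulVec, Pi.single_apply, mul_ite, ite_mul]] at this

lemma col_zero_step (hpd : (Asub W V1).PosDef) (hnonneg : ∀ i j, 0 ≤ W i j)
    (hdiag : ∀ i, W i i = 0) {a b c : ↥(V1ᶜ)} (hab : a ≠ b)
    (ha0 : (Asub W V1)⁻¹ a b = 0) (hw : 0 < W a.1 c.1) :
    (Asub W V1)⁻¹ c b = 0 := by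
  set x : ↥(V1ᶜ) → ℝ := fun d => (Asub W V1)⁻¹ d b with hxdef
  have hrow : ∑ d, Asub W V1 a d * x d = 0 := by
    have := congrFun (mulVec_invCol W V1 hpd b) a
    simpa [mulVec, dotProduct, if_neg hab] using this
  have hsum : ∑ d ∈ Finset.univ.erase a, W a.1 d.1 * x d = 0 := by
    have h1 : ∑ d ∈ Finset.univ.erase a, Asub W V1 a d * x d = 0 := by
      have h0 := Finset.add_sum_erase Finset.univ (fun d => Asub W V1 a d * x d)
        (Finset.mem_univ a)
      have hxa : x a = 0 := ha0
      rw [hxa, mul_zero, zero_add] at h0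
      rw [h0, hrow]
    rw [← neg_eq_zero, ← Finset.sum_neg_distrib]
    rw [← h1]
    refine Finset.sum_congr rfl fun d hd => ?_
    rw [Asub_off W V1 (Finset.ne_of_mem_erase hd).symm]
    ring
  have hac : c ≠ a := by
    intro h
    rw [h] at hw
    rw [hdiag a.1] at hw
    exact lt_irrefl 0 hw
  have heach := (Finset.sum_eq_zero_iff_of_nonneg fun d _ =>
    mul_nonneg (hnonneg a.1 d.1) (inv_nonneg W V1 hpd hnonneg d b)).mp hsum c
    (Finset.mem_erase.mpr ⟨hac, Finset.mem_univ c⟩)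
  rcases mul_eq_zero.mp heach with h | h
  · exact absurd h hw.ne'
  · exact h

lemma inv_pos_of_reach (hpd : (Asub W V1).PosDef) (hnonneg : ∀ i j, 0 ≤ W i j)
    (hdiag : ∀ i, W i i = 0) {a b : ↥(V1ᶜ)} (h : Reach W V1 a b) :
    0 < (Asub W V1)⁻¹ a b := by
  induction h using Relation.ReflTransGen.head_induction_on with
  | refl => exact inv_diag_pos W V1 hpd _
  | head hstep _ ih =>
    rename_i a' c' _
    rcases eq_or_ne a' b with rfl | hne
    · exact inv_diag_pos W V1 hpd _
    · rcases (inv_nonneg W V1 hpd hnonneg a' b).lt_or_eq with h | h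
      · exact h
      · exfalso
        have := col_zero_step W V1 hpd hnonneg hdiag hne h.symm hstep
        rw [this] at ih
        exact lt_irrefl 0 ih

lemma inv_zero_of_not_reach (hpd : (Asub W V1).PosDef) (hnonneg : ∀ i j, 0 ≤ W i j)
    {a b : ↥(V1ᶜ)} (h : ¬ Reach W V1 a b) : (Asub W V1)⁻¹ a b = 0 := by
  classical
  set x : ↥(V1ᶜ) → ℝ := fun d => (Asub W V1)⁻¹ d b with hxdef
  set y : ↥(V1ᶜ) → ℝ := fun c => if Reach W V1 a c then x c else 0 with hydef
  have hAzero : ∀ c, Reach W V1 a c → (Asub W V1 *ᵥ y) c = 0 := by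
    intro c hc
    have h2 : ∀ d, Asub W V1 c d * y d = Asub W V1 c d * x d := by
      intro d
      by_cases hd : Reach W V1 a d
      · simp [hydef, hd]
      · have hcd : c ≠ d := by rintro rfl; exact hd hc
        have hW : W c.1 d.1 = 0 := by
          by_contra hW
          exact hd (hc.tail ((hnonneg c.1 d.1).lt_of_ne (Ne.symm hW)))
        have hA : Asub W V1 c d = 0 := by rw [Asub_off W V1 hcd, hW, neg_zero]
        simp [hydef, hA]
    have hcb : c ≠ b := fun e => h (e ▸ hc)
    calc (Asub W V1 *ᵥ y) c = ∑ d, Asub W V1 c d * y d := rfl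
      _ = ∑ d, Asub W V1 c d * x d := Finset.sum_congr rfl fun d _ => h2 d
      _ = (Asub W V1 *ᵥ x) c := rfl
      _ = 0 := by rw [mulVec_invCol W V1 hpd b]; simp [if_neg hcb]
  have hquad : y ⬝ᵥ (Asub W V1 *ᵥ y) = 0 := by
    apply Finset.sum_eq_zero
    intro c _
    by_cases hc : Reach W V1 a c
    · rw [hAzero c hc, mul_zero]
    · rw [show y c = 0 by simp [hydef, hc], zero_mul]
  have hy : y = 0 := by
    by_contra hy
    have := quad_pos W V1 hpd hy
    rw [hquad] at this
    exact lt_irrefl 0 this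
  have hya : y a = x a := if_pos Relation.ReflTransGen.refl
  rw [hy] at hya
  simpa using hya.symm


variable (W : Matrix (Fin N) (Fin N) ℝ) (V1 : Finset (Fin N))

lemma mem_ne {i : ↥V1} {a : ↥(V1ᶜ)} : i.1 ≠ a.1 := by
  intro h
  have := a.2
  rw [Finset.mem_compl, ← h] at this
  exact this i.2

lemma wred_eq (i j : ↥V1) (hij : i ≠ j) :
    wred (kron (lap W) V1) i j
      = W i.1 j.1 + ∑ a : ↥(V1ᶜ), ∑ b : ↥(V1ᶜ),
          W i.1 a.1 * (Asub W V1)⁻¹ a b * W b.1 j.1 := by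
  have hij' : i.1 ≠ j.1 := fun h => hij (Subtype.ext h)
  have hL12 : ∀ a : ↥(V1ᶜ), lap W i.1 a.1 = -W i.1 a.1 :=
    fun a => lap_apply_ne W (mem_ne V1)
  have hL21 : ∀ b : ↥(V1ᶜ), lap W b.1 j.1 = -W b.1 j.1 :=
    fun b => lap_apply_ne W (Ne.symm (mem_ne V1))
  have hk : kron (lap W) V1 i j = lap W i.1 j.1 -
      ∑ b : ↥(V1ᶜ), (∑ a : ↥(V1ᶜ), lap W i.1 a.1 * (Asub W V1)⁻¹ a b) * lap W b.1 j.1 := by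
    simp [kron, Matrix.sub_apply, submatrix_apply, mul_apply, Asub, Finset.sum_mul]
  show (if i = j then (0:ℝ) else -(kron (lap W) V1 i j)) = _
  rw [if_neg hij, hk, lap_apply_ne W hij']
  have hsum : ∑ b : ↥(V1ᶜ), (∑ a : ↥(V1ᶜ), lap W i.1 a.1 * (Asub W V1)⁻¹ a b) * lap W b.1 j.1
      = ∑ a : ↥(V1ᶜ), ∑ b : ↥(V1ᶜ), W i.1 a.1 * (Asub W V1)⁻¹ a b * W b.1 j.1 := by
    rw [Finset.sum_comm]
    refine Finset.sum_congr rfl fun b _ => ?_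
    rw [Finset.sum_mul]
    refine Finset.sum_congr rfl fun a _ => ?_
    rw [hL12 a, hL21 b]
    ring
  rw [hsum]
  ring

lemma sum_terms_nonneg (hpd : (Asub W V1).PosDef) (hnonneg : ∀ i j, 0 ≤ W i j)
    (i j : ↥V1) :
    0 ≤ ∑ a : ↥(V1ᶜ), ∑ b : ↥(V1ᶜ), W i.1 a.1 * (Asub W V1)⁻¹ a b * W b.1 j.1 :=
  Finset.sum_nonneg fun a _ => Finset.sum_nonneg fun b _ =>
    mul_nonneg (mul_nonneg (hnonneg _ _) (inv_nonneg W V1 hpd hnonneg a b)) (hnonneg _ _)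

lemma path_of_reach {a b : ↥(V1ᶜ)} (h : Reach W V1 a b) :
    ∃ (m : ℕ) (q : ℕ → ↥(V1ᶜ)), q 0 = a ∧ q m = b ∧
      ∀ t < m, 0 < W (q t).1 (q (t + 1)).1 := by
  induction h with
  | refl => exact ⟨0, fun _ => a, rfl, rfl, fun t ht => absurd ht (Nat.not_lt_zero t)⟩
  | tail _ hstep ih =>
    rename_i b' c' _
    obtain ⟨m, q, h0, hm, hs⟩ := ih
    refine ⟨m + 1, fun t => if t ≤ m then q t else c', ?_, ?_, ?_⟩
    · simp [Nat.zero_le, h0]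
    · simp
    · intro t ht
      rcases Nat.lt_or_ge t m with h | h
      · simp only [if_pos h.le, if_pos (by omega : t + 1 ≤ m)]
        exact hs t h
      · have ht' : t = m := by omega
        subst ht'
        simp only [if_pos le_rfl, if_neg (by omega : ¬ t + 1 ≤ t), hm]
        exact hstep

lemma reach_segment (p : ℕ → Fin N) (u M : ℕ)
    (hmem : ∀ t, u ≤ t → t ≤ M → p t ∈ V1ᶜ)
    (hstep : ∀ t, u ≤ t → t < M → 0 < W (p t) (p (t + 1))) :
    ∀ v, u ≤ v → v ≤ M →
      ∃ (h1 : p u ∈ V1ᶜ) (h2 : p v ∈ V1ᶜ), Reach W V1 ⟨p u, h1⟩ ⟨p v, h2⟩ := by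
  intro v
  induction v with
  | zero =>
    intro huv hvM
    have hu0 : u = 0 := by omega
    subst hu0
    exact ⟨hmem 0 le_rfl hvM, hmem 0 le_rfl hvM, Relation.ReflTransGen.refl⟩
  | succ v ih =>
    intro huv hvM
    rcases Nat.lt_or_ge u (v + 1) with h | h
    · have huv' : u ≤ v := by omega
      obtain ⟨h1, h2, hr⟩ := ih huv' (by omega)
      refine ⟨h1, hmem (v + 1) huv hvM, hr.tail ?_⟩
      exact hstep v huv' (by omega)
    · have : u = v + 1 := by omega
      subst this
      exact ⟨hmem _ le_rfl hvM, hmem _ le_rfl hvM, Relation.ReflTransGen.refl⟩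


lemma key (hpd : (Asub W V1).PosDef) (hnonneg : ∀ i j, 0 ≤ W i j) (hdiag : ∀ i, W i i = 0) :
    ∀ m : ℕ, ∀ (i j : ↥V1), i ≠ j → ∀ p : ℕ → Fin N, p 0 = i.1 → p m = j.1 →
      (∀ t < m, 0 < W (p t) (p (t + 1))) →
      (∀ t ≤ m, p t = i.1 ∨ p t = j.1 ∨ p t ∈ V1ᶜ) →
      0 < wred (kron (lap W) V1) i j := by
  intro m
  induction m using Nat.strong_induction_on with
  | _ m ih =>
    intro i j hij p h0 hm hstep hmem
    have hm0 : m ≠ 0 := by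
      rintro rfl
      exact hij (Subtype.ext (h0.symm.trans hm))
    by_cases hmid : ∃ t, 0 < t ∧ t < m ∧ (p t = i.1 ∨ p t = j.1)
    · obtain ⟨t, ht0, htm, hcase⟩ := hmid
      rcases hcase with hc | hc
      · -- restart at t
        refine ih (m - t) (by omega) i j hij (fun s => p (t + s)) (by simpa using hc)
          (by show p (t + (m - t)) = j.1; rw [show t + (m - t) = m by omega, hm]) ?_ ?_
        · intro s hs
          exact hstep (t + s) (by omega)
        · intro s hs
          exact hmem (t + s) (by omega)
      · -- cut at t
        refine ih t htm i j hij p h0 hc ?_ ?_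
        · intro s hs; exact hstep s (by omega)
        · intro s hs; exact hmem s (by omega)
    · push_neg at hmid
      have hint : ∀ t, 0 < t → t < m → p t ∈ V1ᶜ := by
        intro t ht0 htm
        rcases hmem t (by omega) with h | h | h
        · exact absurd h ((hmid t ht0 htm).1)
        · exact absurd h ((hmid t ht0 htm).2)
        · exact h
      match m, hm0 with
      | 1, _ =>
        have hW : 0 < W i.1 j.1 := by
          have := hstep 0 (by omega)
          rwa [h0, hm] at this
        rw [wred_eq W V1 i j hij]
        have := sum_terms_nonneg W V1 hpd hnonneg i j
        linarith
      | (k + 2), _ =>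
        have ha : p 1 ∈ V1ᶜ := hint 1 (by omega) (by omega)
        obtain ⟨h1, h2, hr⟩ := reach_segment W V1 p 1 (k + 1)
          (fun t ht1 ht2 => hint t (by omega) (by omega))
          (fun t ht1 ht2 => hstep t (by omega)) (k + 1) (by omega) le_rfl
        have hGpos := inv_pos_of_reach W V1 hpd hnonneg hdiag hr
        have hWa : 0 < W i.1 (p 1) := by
          have := hstep 0 (by omega)
          rwa [h0] at this
        have hWb : 0 < W (p (k + 1)) j.1 := by
          have := hstep (k + 1) (by omega)
          rwa [show k + 1 + 1 = k + 2 from rfl, hm] at this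
        rw [wred_eq W V1 i j hij]
        have hsumpos : 0 < ∑ a : ↥(V1ᶜ), ∑ b : ↥(V1ᶜ),
            W i.1 a.1 * (Asub W V1)⁻¹ a b * W b.1 j.1 := by
          refine Finset.sum_pos' (fun a _ => Finset.sum_nonneg fun b _ =>
            mul_nonneg (mul_nonneg (hnonneg _ _) (inv_nonneg W V1 hpd hnonneg a b))
              (hnonneg _ _)) ⟨⟨p 1, h1⟩, Finset.mem_univ _, ?_⟩
          refine Finset.sum_pos' (fun b _ =>
            mul_nonneg (mul_nonneg (hnonneg _ _) (inv_nonneg W V1 hpd hnonneg _ b))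
              (hnonneg _ _)) ⟨⟨p (k + 1), h2⟩, Finset.mem_univ _, ?_⟩
          exact mul_pos (mul_pos hWa hGpos) hWb
        have := hnonneg i.1 j.1
        linarith


end KronAux

open KronAux in
/-- For distinct kept vertices `i, j ∈ V1`, the reduced weight of the Kron reduction is
positive iff there is a positive-weight path from `i` to `j` in the original graph all
of whose vertices lie in `{i, j} ∪ V1ᶜ`. -/
theorem kron_reduction_edge_iff_path
    {N : ℕ} (W : Matrix (Fin N) (Fin N) ℝ)
    (hsymm : W.IsSymm) (hnonneg : ∀ i j, 0 ≤ W i j) (hdiag : ∀ i, W i i = 0)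
    (hconn : IsConn W) (V1 : Finset (Fin N)) (h1 : V1.Nonempty) (h2 : V1ᶜ.Nonempty) :
    ∀ i j : ↥V1, i ≠ j →
      (0 < wred (kron (lap W) V1) i j ↔
        ∃ (m : ℕ) (p : ℕ → Fin N), p 0 = i.1 ∧ p m = j.1 ∧
          (∀ t < m, 0 < W (p t) (p (t + 1))) ∧
          (∀ t ≤ m, p t = i.1 ∨ p t = j.1 ∨ p t ∈ V1ᶜ)) := by
  intro i j hij
  have hpd := Asub_posdef W V1 hsymm hnonneg hconn h1
  constructor
  · intro hpos
    rw [wred_eq W V1 i j hij] at hpos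
    by_cases hWij : 0 < W i.1 j.1
    · refine ⟨1, fun t => if t = 0 then i.1 else j.1, by simp, by simp, ?_, ?_⟩
      · intro t ht
        have : t = 0 := by omega
        subst this
        simpa using hWij
      · intro t ht
        interval_cases t
        · simp
        · simp
    · have hW0 : W i.1 j.1 = 0 := le_antisymm (not_lt.mp hWij) (hnonneg _ _)
      rw [hW0, zero_add] at hpos
      have hinner : ∀ a : ↥(V1ᶜ), 0 ≤ ∑ b : ↥(V1ᶜ),
          W i.1 a.1 * (Asub W V1)⁻¹ a b * W b.1 j.1 :=
        fun a => Finset.sum_nonneg fun b _ =>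
          mul_nonneg (mul_nonneg (hnonneg _ _) (inv_nonneg W V1 hpd hnonneg a b)) (hnonneg _ _)
      have hex : ∃ a : ↥(V1ᶜ), 0 < ∑ b : ↥(V1ᶜ),
          W i.1 a.1 * (Asub W V1)⁻¹ a b * W b.1 j.1 := by
        by_contra hno
        push_neg at hno
        have : (∑ a : ↥(V1ᶜ), ∑ b : ↥(V1ᶜ),
            W i.1 a.1 * (Asub W V1)⁻¹ a b * W b.1 j.1) ≤ 0 :=
          Finset.sum_nonpos fun a _ => hno a
        linarith
      obtain ⟨a, ha⟩ := hex
      have hexb : ∃ b : ↥(V1ᶜ), 0 < W i.1 a.1 * (Asub W V1)⁻¹ a b * W b.1 j.1 := by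
        by_contra hno
        push_neg at hno
        have : (∑ b : ↥(V1ᶜ), W i.1 a.1 * (Asub W V1)⁻¹ a b * W b.1 j.1) ≤ 0 :=
          Finset.sum_nonpos fun b _ => hno b
        linarith
      obtain ⟨b, hb⟩ := hexb
      have hWa : 0 < W i.1 a.1 := by
        rcases (hnonneg i.1 a.1).lt_or_eq with h | h
        · exact h
        · rw [← h, zero_mul, zero_mul] at hb; exact absurd hb (lt_irrefl 0)
      have hWb : 0 < W b.1 j.1 := by
        rcases (hnonneg b.1 j.1).lt_or_eq with h | h
        · exact h
        · rw [← h, mul_zero] at hb; exact absurd hb (lt_irrefl 0)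
      have hG : 0 < (Asub W V1)⁻¹ a b := by
        rcases (inv_nonneg W V1 hpd hnonneg a b).lt_or_eq with h | h
        · exact h
        · rw [← h, mul_zero, zero_mul] at hb; exact absurd hb (lt_irrefl 0)
      have hra : Reach W V1 a b := by
        by_contra hnr
        rw [inv_zero_of_not_reach W V1 hpd hnonneg hnr] at hG
        exact lt_irrefl 0 hG
      obtain ⟨m0, q, hq0, hqm, hqs⟩ := path_of_reach W V1 hra
      refine ⟨m0 + 2, fun t => if t = 0 then i.1 else if t ≤ m0 + 1 then (q (t - 1)).1
        else j.1, by simp, ?_, ?_, ?_⟩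
      · simp only [if_neg (by omega : ¬ m0 + 2 = 0), if_neg (by omega : ¬ m0 + 2 ≤ m0 + 1)]
      · intro t ht
        rcases Nat.eq_zero_or_pos t with rfl | ht0
        · simp only [if_pos rfl, if_neg (by omega : ¬ (0:ℕ) + 1 = 0),
            if_pos (by omega : 0 + 1 ≤ m0 + 1)]
          rw [show (0 + 1 - 1 : ℕ) = 0 from rfl, hq0]
          exact hWa
        · rcases Nat.lt_or_ge t (m0 + 1) with h | h
          · simp only [if_neg (by omega : ¬ t = 0), if_pos (by omega : t ≤ m0 + 1),
              if_neg (by omega : ¬ t + 1 = 0), if_pos (by omega : t + 1 ≤ m0 + 1)]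
            have := hqs (t - 1) (by omega)
            rw [show t - 1 + 1 = t by omega] at this
            rw [show t + 1 - 1 = t by omega]
            exact this
          · have : t = m0 + 1 := by omega
            subst this
            simp only [if_neg (by omega : ¬ m0 + 1 = 0), if_pos (le_rfl : m0 + 1 ≤ m0 + 1),
              if_neg (by omega : ¬ m0 + 1 + 1 = 0), if_neg (by omega : ¬ m0 + 1 + 1 ≤ m0 + 1)]
            rw [show m0 + 1 - 1 = m0 by omega, hqm]
            exact hWb
      · intro t ht
        rcases Nat.eq_zero_or_pos t with rfl | ht0
        · left; simp
        · rcases Nat.lt_or_ge t (m0 + 2) with h | h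
          · right; right
            simp only [if_neg (by omega : ¬ t = 0), if_pos (by omega : t ≤ m0 + 1)]
            exact (q (t - 1)).2
          · have : t = m0 + 2 := by omega
            subst this
            right; left
            simp only [if_neg (by omega : ¬ m0 + 2 = 0), if_neg (by omega : ¬ m0 + 2 ≤ m0 + 1)]
  · rintro ⟨m, p, h0, hm, hstep, hmem⟩
    exact key W V1 hpd hnonneg hdiag m i j hij p h0 hm hstep hmem
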